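/- Suppose a ∈ ℓ¹(ℤ) with â ∈ C¹(𝕋) satisfying μ ≥ â(ω) ≥ ν > 0 and |â'(ω)| ≤ 𝒦 on 𝕋. Let g be the sequence with ĝ = indicator of (−1/4,1/4). Then there exist constants C_a > c_a > 0 (depending only on a and N) such that for each N ∈ ℕ: (i) ∑_{s=0}^{N−1} |(a^(s) ∗ g)(λ)|² ≤ C_a/(1+λ²) for all λ ∈ ℤ, and (ii) ∑_{s=0}^{N−1} |(a^(s) ∗ g)(λ)|² ≥ c_a for λ ∈ {0, −1, 1}. -/

import Mathlib

open scoped Real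

/-- Convolution of two sequences on `ℤ`. -/
noncomputable def conv (x y : ℤ → ℂ) (j : ℤ) : ℂ := ∑' k : ℤ, x k * y (j - k)

/-- `s`-fold convolution power of a kernel (`a^(0)` is the Dirac delta). -/
noncomputable def convPow (a : ℤ → ℂ) : ℕ → ℤ → ℂ
  | 0 => fun n => if n = 0 then 1 else 0
  | s + 1 => conv a (convPow a s)

/-- `â(ω) := ∑_{k∈ℤ} a(k) e^{-2πikω}`. -/
noncomputable def ahat (a : ℤ → ℂ) (ω : ℝ) : ℂ :=
  ∑' k : ℤ, a k * Complex.exp (-2 * π * Complex.I * k * ω)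

/-- The sequence whose Fourier transform is the indicator of `(-1/4, 1/4)`. -/
noncomputable def g (n : ℤ) : ℂ :=
  if n = 0 then 1 else 2 * Real.sin (n * Real.pi / 2) / (n * Real.pi)

open Complex MeasureTheory
open scoped NNReal ENNReal

def shearEquiv : ℤ × ℤ ≃ ℤ × ℤ where
  toFun p := (p.1 + p.2, p.1)
  invFun q := (q.2, q.1 - q.2)
  left_inv p := by simp
  right_inv q := by simp

section lemmas
variable {x y : ℤ → ℂ}

lemma summable_pair (hx : Summable fun k => ‖x k‖) (hy : Summable fun k => ‖y k‖) :
    Summable fun p : ℤ × ℤ => ‖x p.2‖ * ‖y (p.1 - p.2)‖ := by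
  have h : Summable fun p : ℤ × ℤ => ‖x p.1‖ * ‖y p.2‖ :=
    hx.mul_of_nonneg hy (fun k => norm_nonneg _) (fun k => norm_nonneg _)
  have key : ((fun p : ℤ × ℤ => ‖x p.2‖ * ‖y (p.1 - p.2)‖) ∘ shearEquiv) =
      fun p : ℤ × ℤ => ‖x p.1‖ * ‖y p.2‖ := by
    funext p
    simp [shearEquiv, Function.comp]
  exact shearEquiv.summable_iff.1 (key ▸ h)

lemma summable_pair' (hx : Summable fun k => ‖x k‖) (hy : Summable fun k => ‖y k‖) :
    Summable fun p : ℤ × ℤ => x p.2 * y (p.1 - p.2) := by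
  apply Summable.of_norm
  simpa [norm_mul] using summable_pair hx hy

lemma summable_conv_norm (hx : Summable fun k => ‖x k‖) (hy : Summable fun k => ‖y k‖) :
    Summable fun j => ‖conv x y j‖ := by
  have S := summable_pair hx hy
  have fib : ∀ j : ℤ, Summable fun k => ‖x k‖ * ‖y (j - k)‖ := fun j => S.prod_factor j
  have maj : Summable fun j => ∑' k, ‖x k‖ * ‖y (j - k)‖ := by
    have := (S.hasSum.prod_fiberwise (fun j => (fib j).hasSum)).summable
    exact this
  apply Summable.of_nonneg_of_le (fun j => norm_nonneg _) _ maj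
  intro j
  calc ‖conv x y j‖ ≤ ∑' k, ‖x k * y (j - k)‖ :=
        norm_tsum_le_tsum_norm (by simpa [norm_mul] using fib j)
    _ = ∑' k, ‖x k‖ * ‖y (j - k)‖ := by simp [norm_mul]

lemma eker_norm (j : ℤ) (t : ℝ) : ‖Complex.exp (-2 * π * Complex.I * j * t)‖ = 1 := by
  have h : (-2 * π * Complex.I * (j : ℂ) * (t : ℂ)) = ((-2 * π * j * t : ℝ) : ℂ) * Complex.I := by
    push_cast; ring
  rw [h, Complex.norm_exp_ofReal_mul_I]

lemma ahat_conv (hx : Summable fun k => ‖x k‖) (hy : Summable fun k => ‖y k‖) (ω : ℝ) :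
    ahat (conv x y) ω = ahat x ω * ahat y ω := by
  set e : ℤ → ℂ := fun j => Complex.exp (-2 * π * Complex.I * j * ω) with he
  have hnorm : ∀ j : ℤ, ‖e j‖ = 1 := fun j => eker_norm j ω
  have hxs : Summable fun k => ‖x k * e k‖ := by simpa [norm_mul, hnorm] using hx
  have hys : Summable fun k => ‖y k * e k‖ := by simpa [norm_mul, hnorm] using hy
  have hF : Summable fun p : ℤ × ℤ => x p.2 * y (p.1 - p.2) * e p.1 := by
    apply Summable.of_norm
    simpa [norm_mul, hnorm] using summable_pair hx hy
  have hfib : ∀ j : ℤ, Summable fun k => x k * y (j - k) * e j := fun j => hF.prod_factor j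
  have hsplit : ∀ p : ℤ × ℤ,
      x (shearEquiv p).2 * y ((shearEquiv p).1 - (shearEquiv p).2) * e (shearEquiv p).1
        = (x p.1 * e p.1) * (y p.2 * e p.2) := by
    intro p
    have : e (p.1 + p.2) = e p.1 * e p.2 := by
      rw [he]; simp only
      rw [← Complex.exp_add]
      congr 1
      push_cast; ring
    simp only [shearEquiv, Equiv.coe_fn_mk]
    rw [add_sub_cancel_left, this]
    ring
  calc ahat (conv x y) ω = ∑' j, (∑' k, x k * y (j - k)) * e j := rfl
    _ = ∑' j, ∑' k, x k * y (j - k) * e j := by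
        refine tsum_congr fun j => ?_
        exact (tsum_mul_right).symm
    _ = ∑' p : ℤ × ℤ, x p.2 * y (p.1 - p.2) * e p.1 := (Summable.tsum_prod' hF hfib).symm
    _ = ∑' p : ℤ × ℤ, (x p.1 * e p.1) * (y p.2 * e p.2) := by
        rw [← shearEquiv.tsum_eq (f := fun p : ℤ × ℤ => x p.2 * y (p.1 - p.2) * e p.1)]
        exact tsum_congr hsplit
    _ = (∑' k, x k * e k) * (∑' k, y k * e k) := (tsum_mul_tsum_of_summable_norm hxs hys).symm
    _ = ahat x ω * ahat y ω := rfl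

end lemmas

lemma summable_convPow {a : ℤ → ℂ} (ha : Summable fun k => ‖a k‖) (s : ℕ) :
    Summable fun k => ‖convPow a s k‖ := by
  induction s with
  | zero =>
      apply summable_of_finite_support
      apply Set.Finite.subset (Set.finite_singleton (0 : ℤ))
      intro k hk
      simp only [Function.mem_support] at hk
      by_contra h
      simp [convPow, h] at hk
      exact h (Set.mem_singleton_iff.2 hk)
  | succ n ih => exact summable_conv_norm ha ih

lemma ahat_convPow {a : ℤ → ℂ} (ha : Summable fun k => ‖a k‖) (s : ℕ) (ω : ℝ) :
    ahat (convPow a s) ω = (ahat a ω) ^ s := by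
  induction s with
  | zero =>
      show (∑' k : ℤ, (if k = 0 then (1:ℂ) else 0) * Complex.exp (-2 * π * Complex.I * k * ω)) = 1
      rw [tsum_eq_single 0 (by intro b hb; simp [hb])]
      simp
  | succ n ih =>
      show ahat (conv a (convPow a n)) ω = _
      rw [ahat_conv ha (summable_convPow ha n) ω, ih, pow_succ]
      ring

lemma g_int (n : ℤ) :
    g n = ∫ ω in (-(1/4 : ℝ))..(1/4 : ℝ), 2 * Complex.exp ((2 * π * Complex.I * n) * ω) := by
  rw [intervalIntegral.integral_const_mul]
  by_cases hn : n = 0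
  · subst hn
    simp [g]
    norm_num
  · have hc : (2 * π * Complex.I * n : ℂ) ≠ 0 := by
      simp [Real.pi_ne_zero, Complex.I_ne_zero, hn]
    rw [integral_exp_mul_complex hc]
    have hπ : (π : ℝ) ≠ 0 := Real.pi_ne_zero
    have hnR : (n : ℂ) ≠ 0 := Int.cast_ne_zero.2 hn
    have e1 : (2 * π * Complex.I * n : ℂ) * ((1/4 : ℝ) : ℂ) = ((n * π / 2 : ℝ) : ℂ) * Complex.I := by
      push_cast; ring
    have e2 : (2 * π * Complex.I * n : ℂ) * ((-(1/4) : ℝ) : ℂ) = -(((n * π / 2 : ℝ) : ℂ) * Complex.I) := by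
      push_cast; ring
    rw [e1, e2]
    have hsin : Complex.exp (((n * π / 2 : ℝ) : ℂ) * Complex.I) -
        Complex.exp (-(((n * π / 2 : ℝ) : ℂ) * Complex.I)) =
        2 * Complex.sin ((n * π / 2 : ℝ) : ℂ) * Complex.I := by
      rw [show -(((n * π / 2 : ℝ) : ℂ) * Complex.I) = (-((n * π / 2 : ℝ) : ℂ)) * Complex.I by ring,
        Complex.exp_mul_I, Complex.exp_mul_I, Complex.cos_neg, Complex.sin_neg]
      ring
    rw [hsin, g, if_neg hn, ← Complex.ofReal_sin]
    have hπC : (π : ℂ) ≠ 0 := Complex.ofReal_ne_zero.2 hπ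
    field_simp

lemma exp_norm' (m : ℤ) (t : ℝ) : ‖Complex.exp ((2 * π * Complex.I * m : ℂ) * t)‖ = 1 := by
  have e : ((2 * π * Complex.I * m : ℂ) * t) = ((2 * π * m * t : ℝ) : ℂ) * Complex.I := by
    push_cast; ring
  rw [e, Complex.norm_exp_ofReal_mul_I]

lemma exp_nnnorm' (m : ℤ) (t : ℝ) : ‖Complex.exp ((2 * π * Complex.I * m : ℂ) * t)‖₊ = 1 :=
  NNReal.coe_injective (by simpa using exp_norm' m t)

lemma conv_g_int {h : ℤ → ℂ} (hh : Summable fun k => ‖h k‖) (lam : ℤ) :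
    conv h g lam = ∫ ω in (-(1/4 : ℝ))..(1/4 : ℝ),
      2 * ahat h ω * Complex.exp ((2 * π * Complex.I * lam) * ω) := by
  have hle : (-(1/4 : ℝ)) ≤ 1/4 := by norm_num
  set s : Set ℝ := Set.Ioc (-(1/4 : ℝ)) (1/4) with hs
  set f : ℤ → ℝ → ℂ := fun k ω =>
    h k * (2 * Complex.exp ((2 * π * Complex.I * ((lam - k : ℤ) : ℂ)) * ω)) with hf
  have hmeas : ∀ k : ℤ, AEStronglyMeasurable (f k) (volume.restrict s) := by
    intro k
    apply Continuous.aestronglyMeasurable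
    fun_prop
  have hnn : ∀ (k : ℤ) (ω : ℝ), ‖f k ω‖₊ = ‖h k‖₊ * 2 := by
    intro k ω
    rw [hf]
    simp only
    rw [nnnorm_mul, nnnorm_mul, exp_nnnorm', mul_one]
    norm_num
  have hsumnn : Summable fun k => ‖h k‖₊ := by
    apply NNReal.summable_coe.1
    simpa using hh
  have hlint : ∑' k : ℤ, (∫⁻ ω in s, ‖f k ω‖₊) ≠ ⊤ := by
    have key : ∀ k : ℤ, (∫⁻ ω in s, ‖f k ω‖₊) ≤ (‖h k‖₊ : ℝ≥0∞) * 2 := by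
      intro k
      calc (∫⁻ ω in s, ‖f k ω‖₊) = ∫⁻ _ω in s, ((‖h k‖₊ * 2 : ℝ≥0) : ℝ≥0∞) := by
            apply lintegral_congr
            intro ω
            rw [hnn k ω]
        _ = ((‖h k‖₊ * 2 : ℝ≥0) : ℝ≥0∞) * volume s := setLIntegral_const s _
        _ ≤ ((‖h k‖₊ * 2 : ℝ≥0) : ℝ≥0∞) * 1 := by
            apply mul_le_mul_right
            rw [hs, Real.volume_Ioc]
            apply ENNReal.ofReal_le_one.2
            norm_num
        _ = (‖h k‖₊ : ℝ≥0∞) * 2 := by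
            rw [mul_one]
            push_cast
            ring
    apply ne_top_of_le_ne_top _ (ENNReal.tsum_le_tsum key)
    rw [ENNReal.tsum_mul_right]
    apply ENNReal.mul_ne_top _ (by norm_num)
    exact ENNReal.tsum_coe_ne_top_iff_summable.2 hsumnn
  have hpt : ∀ ω : ℝ, (∑' k, f k ω) =
      2 * ahat h ω * Complex.exp ((2 * π * Complex.I * lam) * ω) := by
    intro ω
    have hterm : ∀ k : ℤ, f k ω = (h k * Complex.exp (-2 * π * Complex.I * k * ω)) *
        (2 * Complex.exp ((2 * π * Complex.I * lam) * ω)) := by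
      intro k
      rw [hf]
      simp only
      rw [show ((2 * π * Complex.I * ((lam - k : ℤ) : ℂ)) * (ω : ℂ)) =
        (-2 * π * Complex.I * (k : ℂ) * (ω : ℂ)) + ((2 * π * Complex.I * (lam : ℂ)) * (ω : ℂ)) by
          push_cast; ring, Complex.exp_add]
      ring
    rw [tsum_congr hterm, tsum_mul_right]
    show ahat h ω * _ = _
    ring
  calc conv h g lam = ∑' k, h k * g (lam - k) := rfl
    _ = ∑' k, ∫ ω in (-(1/4 : ℝ))..(1/4 : ℝ), f k ω := by
        refine tsum_congr fun k => ?_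
        rw [g_int (lam - k), ← intervalIntegral.integral_const_mul]
    _ = ∑' k, ∫ ω in s, f k ω := by
        refine tsum_congr fun k => intervalIntegral.integral_of_le hle
    _ = ∫ ω in s, ∑' k, f k ω := (integral_tsum hmeas hlint).symm
    _ = ∫ ω in s, 2 * ahat h ω * Complex.exp ((2 * π * Complex.I * lam) * ω) := by
        exact integral_congr_ae (Filter.Eventually.of_forall fun ω => hpt ω)
    _ = ∫ ω in (-(1/4 : ℝ))..(1/4 : ℝ),
          2 * ahat h ω * Complex.exp ((2 * π * Complex.I * lam) * ω) :=
        (intervalIntegral.integral_of_le hle).symm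

lemma hasDerivAt_pow_comp {f f' : ℝ → ℂ} (hf : ∀ x, HasDerivAt f (f' x) x) (s : ℕ) (x : ℝ) :
    HasDerivAt (fun ω => f ω ^ s) ((s : ℂ) * f x ^ (s - 1) * f' x) x := by
  induction s with
  | zero => simpa using hasDerivAt_const x (1 : ℂ)
  | succ n ih =>
      have h := (hf x).mul ih
      have heq : (fun ω => f ω ^ (n + 1)) = fun ω => f ω * f ω ^ n := by
        funext ω; rw [pow_succ]; ring
      rw [heq]
      refine HasDerivAt.congr_deriv (f := fun ω => f ω * f ω ^ n) h ?_
      simp only [Nat.add_sub_cancel]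
      cases n with
      | zero => norm_num
      | succ m =>
          rw [Nat.succ_sub_one]
          push_cast
          ring

section main
variable {a : ℤ → ℂ} {μ ν K : ℝ} {a' : ℝ → ℂ}

lemma ahat_norm_le (hreal : ∀ ω : ℝ, (ahat a ω).im = 0)
    (hlb : ∀ ω : ℝ, ν ≤ (ahat a ω).re) (hub : ∀ ω : ℝ, (ahat a ω).re ≤ μ)
    (hν : 0 < ν) (ω : ℝ) : ‖ahat a ω‖ ≤ μ := by
  have hz : ahat a ω = ((ahat a ω).re : ℂ) := by
    apply Complex.ext <;> simp [hreal ω]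
  rw [hz, Complex.norm_real, Real.norm_eq_abs,
    _root_.abs_of_nonneg (le_trans hν.le (hlb ω))]
  exact hub ω

lemma norm_c (lam : ℤ) : ‖(2 * (π : ℂ) * Complex.I * lam)‖ = 2 * π * |(lam : ℝ)| := by
  simp [norm_mul, Complex.norm_real, abs_of_pos Real.pi_pos]

lemma ibp_bound (ha : Summable fun k => ‖a k‖) (hν : 0 < ν)
    (hderiv : ∀ ω : ℝ, HasDerivAt (ahat a) (a' ω) ω) (hcont : Continuous a')
    (hreal : ∀ ω : ℝ, (ahat a ω).im = 0)
    (hlb : ∀ ω : ℝ, ν ≤ (ahat a ω).re) (hub : ∀ ω : ℝ, (ahat a ω).re ≤ μ)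
    (hK : ∀ ω : ℝ, ‖a' ω‖ ≤ K) (s : ℕ) (lam : ℤ) (hlam : lam ≠ 0) :
    ‖conv (convPow a s) g lam‖ ≤
      (2 * (2 * μ ^ s + s * μ ^ (s - 1) * K / 2)) / (2 * π * |(lam : ℝ)|) := by
  have hμ0 : 0 < μ := lt_of_lt_of_le hν (le_trans (hlb 0) (hub 0))
  have hK0 : 0 ≤ K := le_trans (norm_nonneg _) (hK 0)
  have hacont : Continuous (ahat a) := by
    rw [continuous_iff_continuousAt]
    exact fun x => (hderiv x).continuousAt
  set c : ℂ := 2 * (π : ℂ) * Complex.I * lam with hcdef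
  have hc : c ≠ 0 := by
    rw [hcdef]
    simp [Real.pi_ne_zero, Complex.I_ne_zero, hlam]
  have hcnorm : ‖c‖ = 2 * π * |(lam : ℝ)| := norm_c lam
  have hcpos : 0 < ‖c‖ := by
    rw [hcnorm]
    have : (0:ℝ) < |(lam : ℝ)| := by
      simp [abs_pos, Int.cast_ne_zero, hlam]
    positivity
  -- the integral representation
  have hrep : conv (convPow a s) g lam = ∫ ω in (-(1/4 : ℝ))..(1/4 : ℝ),
      2 * (ahat a ω) ^ s * Complex.exp (c * ω) := by
    rw [conv_g_int (summable_convPow ha s) lam]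
    apply intervalIntegral.integral_congr
    intro ω _
    simp only
    rw [ahat_convPow ha s ω, hcdef]
  -- integration by parts
  have hvD : ∀ x : ℝ, HasDerivAt (fun y : ℝ => Complex.exp (c * y) / c) (Complex.exp (c * x)) x := by
    intro x
    have h1 : HasDerivAt (fun y : ℝ => c * (y : ℂ)) c x := by
      simpa using (Complex.ofRealCLM.hasDerivAt (x := x)).const_mul c
    have h2 := h1.cexp.div_const c
    simpa [mul_div_cancel_right₀ _ hc] using h2
  have huD : ∀ x : ℝ, HasDerivAt (fun ω => (ahat a ω) ^ s)
      ((s : ℂ) * (ahat a x) ^ (s - 1) * a' x) x := fun x => hasDerivAt_pow_comp hderiv s x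
  have hibp := intervalIntegral.integral_mul_deriv_eq_deriv_mul
    (u := fun ω => (ahat a ω) ^ s) (u' := fun ω => (s : ℂ) * (ahat a ω) ^ (s - 1) * a' ω)
    (v := fun ω : ℝ => Complex.exp (c * ω) / c) (v' := fun ω : ℝ => Complex.exp (c * ω))
    (a := -(1/4 : ℝ)) (b := (1/4 : ℝ))
    (fun x _ => huD x) (fun x _ => hvD x)
    (Continuous.intervalIntegrable (by fun_prop) _ _)
    (Continuous.intervalIntegrable (by fun_prop) _ _)
  -- bound each piece
  have hexp_div : ∀ x : ℝ, ‖Complex.exp (c * x) / c‖ = 1 / ‖c‖ := by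
    intro x
    rw [norm_div, hcdef]
    rw [exp_norm' lam x]
  have hbd_pow : ∀ x : ℝ, ‖(ahat a x) ^ s‖ ≤ μ ^ s := by
    intro x
    rw [norm_pow]
    exact pow_le_pow_left₀ (norm_nonneg _) (ahat_norm_le hreal hlb hub hν x) s
  have hboundary : ∀ x : ℝ, ‖(ahat a x) ^ s * (Complex.exp (c * x) / c)‖ ≤ μ ^ s / ‖c‖ := by
    intro x
    rw [norm_mul, hexp_div x]
    calc ‖(ahat a x) ^ s‖ * (1 / ‖c‖) ≤ μ ^ s * (1 / ‖c‖) := by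
          apply mul_le_mul_of_nonneg_right (hbd_pow x)
          positivity
      _ = μ ^ s / ‖c‖ := by ring
  have hint2 : ‖∫ ω in (-(1/4 : ℝ))..(1/4 : ℝ),
      ((s : ℂ) * (ahat a ω) ^ (s - 1) * a' ω) * (Complex.exp (c * ω) / c)‖ ≤
      (s * μ ^ (s - 1) * K / ‖c‖) * (1/2) := by
    refine le_trans (intervalIntegral.norm_integral_le_of_norm_le_const
      (C := s * μ ^ (s - 1) * K / ‖c‖) ?_) (le_of_eq (by norm_num))
    intro x _
    rw [norm_mul, hexp_div x, norm_mul, norm_mul]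
    have h1 : ‖((s : ℕ) : ℂ)‖ = (s : ℝ) := by simp
    rw [h1]
    have h2 : ‖(ahat a x) ^ (s-1)‖ ≤ μ ^ (s-1) := by
      rw [norm_pow]
      exact pow_le_pow_left₀ (norm_nonneg _) (ahat_norm_le hreal hlb hub hν x) _
    calc (s : ℝ) * ‖(ahat a x) ^ (s-1)‖ * ‖a' x‖ * (1 / ‖c‖)
        ≤ (s : ℝ) * μ ^ (s-1) * K * (1 / ‖c‖) := by
          apply mul_le_mul_of_nonneg_right _ (by positivity)
          apply mul_le_mul (by
            apply mul_le_mul_of_nonneg_left h2 (by positivity)) (hK x) (norm_nonneg _) (by positivity)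
      _ = s * μ ^ (s-1) * K / ‖c‖ := by ring
  -- combine
  rw [hrep]
  have h2int : (∫ ω in (-(1/4 : ℝ))..(1/4 : ℝ), 2 * (ahat a ω) ^ s * Complex.exp (c * ω))
      = 2 * ∫ ω in (-(1/4 : ℝ))..(1/4 : ℝ), (ahat a ω) ^ s * Complex.exp (c * ω) := by
    rw [← intervalIntegral.integral_const_mul]
    apply intervalIntegral.integral_congr
    intro ω _
    ring
  rw [h2int, norm_mul]
  have : ‖(2 : ℂ)‖ = 2 := by norm_num
  rw [this]
  rw [hibp]
  have hstep : ‖(fun ω => (ahat a ω) ^ s) (1/4 : ℝ) * ((fun ω : ℝ => Complex.exp (c * ω) / c) (1/4 : ℝ)) -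
      (fun ω => (ahat a ω) ^ s) (-(1/4) : ℝ) * ((fun ω : ℝ => Complex.exp (c * ω) / c) (-(1/4) : ℝ)) -
      ∫ ω in (-(1/4 : ℝ))..(1/4 : ℝ), ((s : ℂ) * (ahat a ω) ^ (s - 1) * a' ω) * (Complex.exp (c * ω) / c)‖
      ≤ (μ ^ s / ‖c‖ + μ ^ s / ‖c‖) + (s * μ ^ (s-1) * K / ‖c‖) * (1/2) := by
    apply le_trans (norm_sub_le _ _)
    apply add_le_add _ hint2
    apply le_trans (norm_sub_le _ _)
    exact add_le_add (hboundary _) (hboundary _)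
  apply le_trans (mul_le_mul_of_nonneg_left hstep (by norm_num : (0:ℝ) ≤ 2))
  rw [← hcnorm]
  apply le_of_eq
  field_simp
  ring

lemma triv_bound (ha : Summable fun k => ‖a k‖) (hν : 0 < ν)
    (hreal : ∀ ω : ℝ, (ahat a ω).im = 0)
    (hlb : ∀ ω : ℝ, ν ≤ (ahat a ω).re) (hub : ∀ ω : ℝ, (ahat a ω).re ≤ μ)
    (s : ℕ) (lam : ℤ) : ‖conv (convPow a s) g lam‖ ≤ μ ^ s := by
  have hμ0 : 0 < μ := lt_of_lt_of_le hν (le_trans (hlb 0) (hub 0))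
  rw [conv_g_int (summable_convPow ha s) lam]
  refine le_trans (intervalIntegral.norm_integral_le_of_norm_le_const (C := 2 * μ ^ s) ?_)
    (le_of_eq ?_)
  · intro x _
    rw [norm_mul, norm_mul, exp_norm' lam x, mul_one, ahat_convPow ha s x]
    have h2 : ‖(2 : ℂ)‖ = 2 := by norm_num
    rw [h2, norm_pow]
    have := pow_le_pow_left₀ (norm_nonneg _) (ahat_norm_le hreal hlb hub hν x) s
    nlinarith [this]
  · rw [show |(1/4 : ℝ) - (-(1/4))| = 1/2 by norm_num]
    ring

lemma conv_delta {a : ℤ → ℂ} (lam : ℤ) : conv (convPow a 0) g lam = g lam := by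
  show (∑' k : ℤ, (if k = 0 then (1:ℂ) else 0) * g (lam - k)) = g lam
  rw [tsum_eq_single 0 (by intro b hb; simp [hb])]
  simp

end main


/-- under the kernel conditions `μ ≥ â ≥ ν > 0`, `|â'| ≤ 𝒦`, for each
`N ≥ 1` there exist constants `C_a > c_a > 0` with
`∑_{s<N} |(a^(s) ∗ g)(λ)|² ≤ C_a/(1+λ²)` for all `λ ∈ ℤ`, and
`∑_{s<N} |(a^(s) ∗ g)(λ)|² ≥ c_a` for `λ ∈ {0, −1, 1}`. -/
theorem conv_power_two_sided_bounds (a : ℤ → ℂ) (ha : Summable fun k => ‖a k‖)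
    (μ ν K : ℝ) (hν : 0 < ν) (a' : ℝ → ℂ)
    (hderiv : ∀ ω : ℝ, HasDerivAt (ahat a) (a' ω) ω) (hcont : Continuous a')
    (hreal : ∀ ω : ℝ, (ahat a ω).im = 0)
    (hlb : ∀ ω : ℝ, ν ≤ (ahat a ω).re) (hub : ∀ ω : ℝ, (ahat a ω).re ≤ μ)
    (hK : ∀ ω : ℝ, ‖a' ω‖ ≤ K) :
    ∀ N : ℕ, 1 ≤ N → ∃ Ca ca : ℝ, 0 < ca ∧ ca < Ca ∧
      (∀ lam : ℤ, ∑ s ∈ Finset.range N, ‖conv (convPow a s) g lam‖ ^ 2 ≤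
        Ca / (1 + (lam : ℝ) ^ 2)) ∧
      (∀ lam : ℤ, lam = 0 ∨ lam = 1 ∨ lam = -1 →
        ca ≤ ∑ s ∈ Finset.range N, ‖conv (convPow a s) g lam‖ ^ 2) := by
  intro N hN
  have hμ0 : 0 < μ := lt_of_lt_of_le hν (le_trans (hlb 0) (hub 0))
  have hK0 : 0 ≤ K := le_trans (norm_nonneg _) (hK 0)
  have hπ : 0 < π := Real.pi_pos
  have hπ4 : (4 : ℝ) < π ^ 2 := by nlinarith [Real.pi_gt_three]
  set Q : ℕ → ℝ := fun s => (2 * (2 * μ ^ s + s * μ ^ (s - 1) * K / 2)) / (2 * π) with hQ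
  have hQ0 : ∀ s, 0 ≤ Q s := by
    intro s
    rw [hQ]
    positivity
  refine ⟨(∑ s ∈ Finset.range N, (μ ^ (2 * s) + Q s ^ 2)) + 1, 4 / π ^ 2, by positivity, ?_, ?_, ?_⟩
  · have h1 : (4 : ℝ) / π ^ 2 < 1 := (div_lt_one (by positivity)).2 hπ4
    have h2 : (0 : ℝ) ≤ ∑ s ∈ Finset.range N, (μ ^ (2 * s) + Q s ^ 2) :=
      Finset.sum_nonneg fun s _ => by positivity
    linarith
  · intro lam
    have hterm : ∀ s ∈ Finset.range N,
        (1 + (lam : ℝ) ^ 2) * ‖conv (convPow a s) g lam‖ ^ 2 ≤ μ ^ (2 * s) + Q s ^ 2 := by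
      intro s _
      have hT0 : (0 : ℝ) ≤ ‖conv (convPow a s) g lam‖ := norm_nonneg _
      have h1 : ‖conv (convPow a s) g lam‖ ^ 2 ≤ μ ^ (2 * s) := by
        calc ‖conv (convPow a s) g lam‖ ^ 2 ≤ (μ ^ s) ^ 2 :=
              pow_le_pow_left₀ hT0 (triv_bound ha hν hreal hlb hub s lam) 2
          _ = μ ^ (2 * s) := by rw [← pow_mul, mul_comm]
      have h2 : (lam : ℝ) ^ 2 * ‖conv (convPow a s) g lam‖ ^ 2 ≤ Q s ^ 2 := by
        by_cases hlam : lam = 0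
        · subst hlam
          simpa using sq_nonneg (Q s)
        · have hb := ibp_bound ha hν hderiv hcont hreal hlb hub hK s lam hlam
          have habs : (0 : ℝ) < |(lam : ℝ)| := by
            simp [abs_pos, Int.cast_ne_zero, hlam]
          have hmul : |(lam : ℝ)| * ‖conv (convPow a s) g lam‖ ≤ Q s := by
            calc |(lam : ℝ)| * ‖conv (convPow a s) g lam‖
                ≤ |(lam : ℝ)| * ((2 * (2 * μ ^ s + s * μ ^ (s - 1) * K / 2)) / (2 * π * |(lam : ℝ)|)) :=
                  mul_le_mul_of_nonneg_left hb habs.le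
              _ = Q s := by
                  simp only [hQ]
                  field_simp
          have := mul_le_mul hmul hmul (by positivity) (hQ0 s)
          calc (lam : ℝ) ^ 2 * ‖conv (convPow a s) g lam‖ ^ 2
              = (|(lam : ℝ)| * ‖conv (convPow a s) g lam‖) ^ 2 := by
                rw [mul_pow, _root_.sq_abs]
            _ ≤ Q s ^ 2 := by nlinarith [this]
      nlinarith [h1, h2, sq_nonneg ((lam : ℝ))]
    have hsum := Finset.sum_le_sum hterm
    rw [← Finset.mul_sum] at hsum
    have hpos : (0 : ℝ) < 1 + (lam : ℝ) ^ 2 := by positivity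
    rw [le_div_iff₀ hpos]
    calc (∑ s ∈ Finset.range N, ‖conv (convPow a s) g lam‖ ^ 2) * (1 + (lam : ℝ) ^ 2)
        = (1 + (lam : ℝ) ^ 2) * ∑ s ∈ Finset.range N, ‖conv (convPow a s) g lam‖ ^ 2 := by ring
      _ ≤ ∑ s ∈ Finset.range N, (μ ^ (2 * s) + Q s ^ 2) := hsum
      _ ≤ (∑ s ∈ Finset.range N, (μ ^ (2 * s) + Q s ^ 2)) + 1 := by linarith
  · intro lam hlam
    have hmem : (0 : ℕ) ∈ Finset.range N := Finset.mem_range.2 hN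
    have hfirst : (4 : ℝ) / π ^ 2 ≤ ‖conv (convPow a 0) g lam‖ ^ 2 := by
      rw [conv_delta]
      have hval : g lam = ((2 / π : ℝ) : ℂ) ∨ g lam = 1 := by
        rcases hlam with rfl | rfl | rfl
        · right; simp [g]
        · left
          rw [g, if_neg (by norm_num)]
          have h1 : Real.sin ((((1 : ℤ) : ℝ)) * π / 2) = 1 := by
            rw [show (((1 : ℤ) : ℝ)) * π / 2 = π / 2 by push_cast; ring, Real.sin_pi_div_two]
          rw [h1]
          have hπC : (π : ℂ) ≠ 0 := Complex.ofReal_ne_zero.2 hπ.ne'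
          push_cast
          field_simp
        · left
          rw [g, if_neg (by norm_num)]
          have h1 : Real.sin ((((-1 : ℤ) : ℝ)) * π / 2) = -1 := by
            rw [show (((-1 : ℤ) : ℝ)) * π / 2 = -(π / 2) by push_cast; ring, Real.sin_neg,
              Real.sin_pi_div_two]
          rw [h1]
          have hπC : (π : ℂ) ≠ 0 := Complex.ofReal_ne_zero.2 hπ.ne'
          push_cast
          field_simp
      rcases hval with h | h
      · rw [h, Complex.norm_real, Real.norm_eq_abs, _root_.abs_of_nonneg (by positivity), div_pow]
        norm_num
      · rw [h]
        norm_num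
        rw [div_le_one (by positivity)]
        linarith
    calc (4 : ℝ) / π ^ 2 ≤ ‖conv (convPow a 0) g lam‖ ^ 2 := hfirst
      _ ≤ ∑ s ∈ Finset.range N, ‖conv (convPow a s) g lam‖ ^ 2 :=
        Finset.single_le_sum (f := fun s => ‖conv (convPow a s) g lam‖ ^ 2)
          (fun s _ => by positivity) hmem
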